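/- Let G be a finite connected loopless multigraph with n vertices and m edges, and let f be a divisor on G with deg(f) > 2(m − n). Then ρ(f) = deg(f) − g, where g = m − n + 1 is the genus of G. -/

import Mathlib

/-- A finite loopless multigraph on vertex set `V`, given by its symmetric
edge-multiplicity function `e`. -/
structure Multigraph (V : Type*) [Fintype V] [DecidableEq V] where
  e : V → V → ℕ
  symm : ∀ u v, e u v = e v u
  loopless : ∀ v, e v v = 0

namespace Multigraph

variable {V : Type*} [Fintype V] [DecidableEq V]

/-- The degree of a vertex of a multigraph. -/
def vdeg (G : Multigraph V) (v : V) : ℕ := ∑ u, G.e v u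

/-- The number of edges of a multigraph. -/
def edgeCount (G : Multigraph V) : ℕ := (∑ u, ∑ v, G.e u v) / 2

/-- The underlying simple graph (adjacency) of a multigraph. -/
def toSimple (G : Multigraph V) : SimpleGraph V where
  Adj u v := G.e u v ≠ 0
  symm := ⟨by intro u v h; exact show G.e v u ≠ 0 by rwa [G.symm]⟩
  loopless := ⟨by intro v h; exact h (G.loopless v)⟩

/-- A multigraph is connected if its underlying simple graph is. -/
def Connected (G : Multigraph V) : Prop := G.toSimple.Connected

/-- The degree of a divisor `f : V → ℤ`. -/
def degree (f : V → ℤ) : ℤ := ∑ v, f v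

/-- A divisor is effective if all its values are nonnegative. -/
def Effective (f : V → ℤ) : Prop := ∀ v, 0 ≤ f v

/-- The divisor `x · Δ_G`, where `Δ_G` is the Laplacian matrix of `G`. -/
def lapApply (G : Multigraph V) (x : V → ℤ) : V → ℤ :=
  fun v => x v * (G.vdeg v : ℤ) - ∑ u, x u * (G.e u v : ℤ)

/-- Linear equivalence of divisors: `g = f + x Δ_G` for some `x : V → ℤ`. -/
def LinEquiv (G : Multigraph V) (f g : V → ℤ) : Prop :=
  ∃ x : V → ℤ, g = f + G.lapApply x

/-- A divisor is L-effective if it is linearly equivalent to an effective divisor. -/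
def LEffective (G : Multigraph V) (f : V → ℤ) : Prop :=
  ∃ g : V → ℤ, G.LinEquiv f g ∧ Effective g

/-- The Baker–Norine rank of a divisor: `-1` if `f` is not L-effective, and
otherwise the largest `r ≥ 0` such that `f - λ` is L-effective for every
effective divisor `λ` of degree `r`. -/
noncomputable def rank (G : Multigraph V) (f : V → ℤ) : ℤ :=
  sSup ({-1} ∪ {r : ℤ | 0 ≤ r ∧
    ∀ l : V → ℤ, Effective l → degree l = r → G.LEffective (f - l)})

/-- The divisor `ε_v`. -/
def epsDiv (v : V) : V → ℤ := fun u => if u = v then 1 else 0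

/-- A tree: a connected acyclic (multi)graph. -/
def IsTree (G : Multigraph V) : Prop :=
  G.toSimple.IsTree ∧ ∀ u v, G.e u v ≤ 1

/-- A cycle graph: connected, and every vertex has degree 2. -/
def IsCycleGraph (G : Multigraph V) : Prop :=
  G.Connected ∧ ∀ v, G.vdeg v = 2

/-- An edge: two vertices joined by a single edge. -/
def IsEdgeGraph (G : Multigraph V) : Prop :=
  Fintype.card V = 2 ∧ G.Connected ∧ ∀ u v, G.e u v ≤ 1

/-- A good divisor (on a cycle): degree `0` and linearly equivalent to `0`. -/
def Good (G : Multigraph V) (f : V → ℤ) : Prop :=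
  degree f = 0 ∧ G.LinEquiv f 0

/-- A bad divisor (on a cycle): degree `0` and not linearly equivalent to `0`. -/
def Bad (G : Multigraph V) (f : V → ℤ) : Prop :=
  degree f = 0 ∧ ¬ G.LinEquiv f 0

/-- The induced sub-multigraph on a finite set `S` of vertices. -/
def induce (G : Multigraph V) (S : Finset V) : Multigraph {x // x ∈ S} where
  e a b := G.e a.1 b.1
  symm := fun a b => G.symm a.1 b.1
  loopless := fun a => G.loopless a.1

/-- `v` decomposes the induced subgraph of `G` on `S` into the induced
subgraphs on `V1` and `U`: they cover `S`, meet exactly in `v`, are both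
connected, and there is no edge between `V1 \ {v}` and `U \ {v}`. -/
def DecompOn (G : Multigraph V) (S : Finset V) (v : V) (V1 U : Finset V) : Prop :=
  V1 ∪ U = S ∧ V1 ∩ U = {v} ∧
  (G.induce V1).Connected ∧ (G.induce U).Connected ∧
  ∀ a ∈ V1, ∀ b ∈ U, a ≠ v → b ≠ v → G.e a b = 0

/-- `v` decomposes `G` into the induced subgraphs on `V1` and `U`. -/
def Decomp (G : Multigraph V) (v : V) (V1 U : Finset V) : Prop :=
  G.DecompOn Finset.univ v V1 U

/-- The contraction `f_{G/H}` of a divisor `f`, where `H = G(U)` and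
`G/H = G(V1)`, the cut vertex being `v`. -/
def contractDiv (f : V → ℤ) (v : V) (V1 U : Finset V) : {x // x ∈ V1} → ℤ :=
  fun u => if u.1 = v then ∑ w ∈ U, f w else f u.1

/-- The zero `f_{N(H)}` of a divisor `f`, where `H = G(U)`, the cut vertex
being `v`. -/
def zeroDiv (f : V → ℤ) (v : V) (U : Finset V) : {x // x ∈ U} → ℤ :=
  fun u => if u.1 = v then - ∑ w ∈ U.erase v, f w else f u.1

/-- `ε_v` as a divisor on an induced subgraph. -/
def epsDivOn (S : Finset V) (v : V) : {x // x ∈ S} → ℤ :=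
  fun u => if u.1 = v then 1 else 0

/-- A simple cycle of `G`, given as a sub-multigraph (an edge-multiplicity
function bounded by that of `G`) which is connected on its support and in
which every vertex of its (nonempty) support has degree 2. -/
def IsCycleSubgraph (G : Multigraph V) (h : V → V → ℕ) : Prop :=
  (∀ u v, h u v ≤ G.e u v) ∧ (∀ u v, h u v = h v u) ∧
  (∀ v, (∑ u, h v u = 0) ∨ (∑ u, h v u = 2)) ∧
  (∃ v, ∑ u, h v u ≠ 0) ∧
  (∀ v w, (∑ u, h v u ≠ 0) → (∑ u, h w u ≠ 0) →
    Relation.ReflTransGen (fun a b => h a b ≠ 0) v w)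

/-- The vertex support of a sub-multigraph. -/
def cycleSupport (h : V → V → ℕ) : Finset V :=
  Finset.univ.filter (fun v => ∑ u, h v u ≠ 0)

/-- A cactus: a connected multigraph in which any two distinct simple cycles
have at most one vertex in common (in particular every edge has multiplicity
at most 2, since parallel edges form 2-cycles). -/
def IsCactus (G : Multigraph V) : Prop :=
  G.Connected ∧ (∀ u v, G.e u v ≤ 2) ∧
  ∀ h₁ h₂ : V → V → ℕ, G.IsCycleSubgraph h₁ → G.IsCycleSubgraph h₂ → h₁ ≠ h₂ →
    (cycleSupport h₁ ∩ cycleSupport h₂).card ≤ 1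

/-- One step of a block elimination scheme: `G(S')` is obtained from `G(S)`
by contracting a free block (an edge or a cycle) `G(U)` at the vertex `v`. -/
def BlockStep (G : Multigraph V) (S S' : Finset V) : Prop :=
  ∃ (v : V) (U : Finset V), G.DecompOn S v S' U ∧
    ((G.induce U).IsEdgeGraph ∨ (G.induce U).IsCycleGraph)

/-- A block elimination scheme: a sequence of contractions of free blocks,
starting from `G` and ending at a single vertex. -/
def HasBlockEliminationScheme (G : Multigraph V) : Prop :=
  ∃ (k : ℕ) (S : ℕ → Finset V), S 0 = Finset.univ ∧ (S k).card = 1 ∧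
    ∀ i < k, G.BlockStep (S i) (S (i + 1))

end Multigraph

set_option linter.unusedSectionVars false

namespace Multigraph

variable {V : Type*} [Fintype V] [DecidableEq V]

def e' (G : Multigraph V) (u v : V) : ℤ := (G.e u v : ℤ)

lemma e'_nonneg (G : Multigraph V) (u v : V) : 0 ≤ G.e' u v := Int.natCast_nonneg _

lemma e'_symm (G : Multigraph V) (u v : V) : G.e' u v = G.e' v u := by
  unfold e'; rw [G.symm]

lemma e'_diag (G : Multigraph V) (v : V) : G.e' v v = 0 := by
  simp [e', G.loopless v]

/-- handy form of the Laplacian action -/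
lemma lapApply_eq (G : Multigraph V) (x : V → ℤ) (v : V) :
    G.lapApply x v = ∑ u, (x v - x u) * G.e' u v := by
  unfold lapApply vdeg e'
  push_cast
  have h1 : (∑ u, (G.e v u : ℤ)) = ∑ u, (G.e u v : ℤ) :=
    Finset.sum_congr rfl fun u _ => by rw [G.symm]
  rw [h1, Finset.mul_sum, ← Finset.sum_sub_distrib]
  exact Finset.sum_congr rfl fun u _ => by ring

/-- The Laplacian action as a `ℤ`-linear map. -/
def lapZ (G : Multigraph V) : (V → ℤ) →ₗ[ℤ] (V → ℤ) where
  toFun x := G.lapApply x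
  map_add' x y := by
    funext v
    simp only [lapApply_eq, Pi.add_apply, ← Finset.sum_add_distrib]
    exact Finset.sum_congr rfl fun u _ => by ring
  map_smul' c x := by
    funext v
    simp only [lapApply_eq, Pi.smul_apply, smul_eq_mul, RingHom.id_apply, Finset.mul_sum]
    exact Finset.sum_congr rfl fun u _ => by ring

lemma lapZ_apply (G : Multigraph V) (x : V → ℤ) : G.lapZ x = G.lapApply x := rfl

lemma degree_add (f g : V → ℤ) : degree (f + g) = degree f + degree g := by
  unfold degree; simp [Finset.sum_add_distrib]

lemma degree_sub (f g : V → ℤ) : degree (f - g) = degree f - degree g := by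
  unfold degree; simp [Finset.sum_sub_distrib]

lemma degree_lapApply (G : Multigraph V) (x : V → ℤ) : degree (G.lapApply x) = 0 := by
  unfold degree
  simp only [lapApply_eq]
  have : ∀ v, ∑ u, (x v - x u) * G.e' u v = x v * (∑ u, G.e' u v) - ∑ u, x u * G.e' u v := by
    intro v
    rw [Finset.mul_sum, ← Finset.sum_sub_distrib]
    exact Finset.sum_congr rfl fun u _ => by ring
  simp only [this]
  rw [Finset.sum_sub_distrib, sub_eq_zero]
  have h2 : ∑ w, ∑ u, x u * G.e' u w = ∑ u, x u * ∑ w, G.e' u w := by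
    rw [Finset.sum_comm]
    exact Finset.sum_congr rfl fun u _ => (Finset.mul_sum _ _ _).symm
  rw [h2]
  refine Finset.sum_congr rfl fun w _ => ?_
  congr 1
  exact Finset.sum_congr rfl fun u _ => G.e'_symm u w

lemma linEquiv_refl (G : Multigraph V) (f : V → ℤ) : G.LinEquiv f f :=
  ⟨0, by rw [← lapZ_apply, map_zero]; simp⟩

lemma linEquiv_symm (G : Multigraph V) {f g : V → ℤ} (h : G.LinEquiv f g) : G.LinEquiv g f := by
  obtain ⟨x, hx⟩ := h
  exact ⟨-x, by rw [hx, ← lapZ_apply, ← lapZ_apply, map_neg]; abel⟩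

lemma linEquiv_trans (G : Multigraph V) {f g h : V → ℤ} (h1 : G.LinEquiv f g)
    (h2 : G.LinEquiv g h) : G.LinEquiv f h := by
  obtain ⟨x, hx⟩ := h1; obtain ⟨y, hy⟩ := h2
  exact ⟨x + y, by rw [hy, hx, ← lapZ_apply, ← lapZ_apply, ← lapZ_apply, map_add]; abel⟩

lemma degree_eq_of_linEquiv (G : Multigraph V) {f g : V → ℤ} (h : G.LinEquiv f g) :
    degree g = degree f := by
  obtain ⟨x, hx⟩ := h
  rw [hx, degree_add, degree_lapApply, add_zero]

lemma lEffective_congr (G : Multigraph V) {f g : V → ℤ} (h : G.LinEquiv f g) :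
    G.LEffective g → G.LEffective f := by
  rintro ⟨k, hk, hke⟩
  exact ⟨k, G.linEquiv_trans h hk, hke⟩

lemma degree_nonneg_of_lEffective (G : Multigraph V) {f : V → ℤ} (h : G.LEffective f) :
    0 ≤ degree f := by
  obtain ⟨g, hg, hge⟩ := h
  rw [← G.degree_eq_of_linEquiv hg]
  exact Finset.sum_nonneg fun v _ => hge v

lemma effective_degree_nonneg {l : V → ℤ} (h : Effective l) : 0 ≤ degree l :=
  Finset.sum_nonneg fun v _ => h v

/-- if `f - l` is L-effective and `l` is effective, then `f` is L-effective. -/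
lemma lEffective_of_sub (G : Multigraph V) {f l : V → ℤ} (h : G.LEffective (f - l))
    (hl : Effective l) : G.LEffective f := by
  obtain ⟨g, ⟨x, hx⟩, hge⟩ := h
  exact ⟨g + l, ⟨x, by rw [hx]; abel⟩, fun v => add_nonneg (hge v) (hl v)⟩

end Multigraph
namespace Multigraph

open Finset

variable {V : Type*} [Fintype V] [DecidableEq V]

/-- A connectivity-compatible injective ranking of the vertices, with `q` first. -/
lemma exists_rho (G : Multigraph V) (hG : G.Connected) (q : V) :
    ∃ ρ : V → ℕ, Function.Injective ρ ∧ (∀ v, v ≠ q → ρ q < ρ v) ∧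
      (∀ v, v ≠ q → ∃ u, G.e u v ≠ 0 ∧ ρ u < ρ v) := by
  classical
  haveI : Nonempty V := ⟨q⟩
  set n := Fintype.card V with hn
  have hnpos : 0 < n := Fintype.card_pos
  set σ := Fintype.equivFin V with hσ
  set d : V → ℕ := fun v => (G.toSimple).dist q v with hd
  refine ⟨fun v => d v * n + (σ v : ℕ), ?_, ?_, ?_⟩
  · intro a b h
    have h' : d a * n + (σ a : ℕ) = d b * n + (σ b : ℕ) := h
    have ha : (σ a : ℕ) < n := (σ a).isLt
    have hb : (σ b : ℕ) < n := (σ b).isLt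
    have key : ∀ w : V, (d w * n + (σ w : ℕ)) / n = d w := by
      intro w
      rw [mul_comm, Nat.mul_add_div hnpos, Nat.div_eq_of_lt (σ w).isLt, add_zero]
    have hdd : d a = d b := by rw [← key a, ← key b, h']
    have hss : (σ a : ℕ) = (σ b : ℕ) := by
      rw [hdd] at h'; omega
    exact σ.injective (Fin.ext hss)
  · intro v hv
    have hdq : d q = 0 := SimpleGraph.dist_self
    have hdv : 0 < d v := SimpleGraph.Connected.pos_dist_of_ne hG (Ne.symm hv)
    have h1 : 1 * n ≤ d v * n := Nat.mul_le_mul_right n hdv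
    have ha : (σ q : ℕ) < n := (σ q).isLt
    show d q * n + (σ q : ℕ) < d v * n + (σ v : ℕ)
    rw [hdq]
    omega
  · intro v hv
    obtain ⟨p, hp⟩ := SimpleGraph.Connected.exists_walk_length_eq_dist hG v q
    cases p with
    | nil => exact absurd rfl hv
    | @cons _ u _ hadj p' =>
      refine ⟨u, ?_, ?_⟩
      · rw [G.symm]; exact hadj
      · have hl : p'.length + 1 = (G.toSimple).dist v q := hp
        have hdu : d u ≤ p'.length := by
          have := SimpleGraph.dist_le p'
          rw [hd]
          calc (G.toSimple).dist q u = (G.toSimple).dist u q := SimpleGraph.dist_comm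
            _ ≤ p'.length := SimpleGraph.dist_le p'
        have hdv : d v = p'.length + 1 := by
          rw [hd]
          calc (G.toSimple).dist q v = (G.toSimple).dist v q := SimpleGraph.dist_comm
            _ = p'.length + 1 := hl.symm
        have hduv : d u + 1 ≤ d v := by omega
        have h2 : (d u + 1) * n ≤ d v * n := Nat.mul_le_mul_right n hduv
        have h3 : (d u + 1) * n = d u * n + n := by ring
        have ha : (σ u : ℕ) < n := (σ u).isLt
        show d u * n + (σ u : ℕ) < d v * n + (σ v : ℕ)
        omega

/-- splitting the (doubled) edge count along an injective ranking -/
lemma sum_split (G : Multigraph V) {ρ : V → ℕ} (hinj : Function.Injective ρ) :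
    ∑ u, ∑ v, G.e u v = 2 * ∑ v, ∑ u ∈ Finset.univ.filter (fun u => ρ u < ρ v), G.e u v := by
  have step1 : ∑ u, ∑ v, G.e u v = ∑ v, ∑ u, G.e u v := Finset.sum_comm
  have step2 : ∀ v, ∑ u, G.e u v
      = ∑ u ∈ Finset.univ.filter (fun u => ρ u < ρ v), G.e u v
      + ∑ u ∈ Finset.univ.filter (fun u => ¬ ρ u < ρ v), G.e u v := by
    intro v
    exact (Finset.sum_filter_add_sum_filter_not _ _ _).symm
  have step3 : ∀ v, ∑ u ∈ Finset.univ.filter (fun u => ¬ ρ u < ρ v), G.e u v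
      = ∑ u, if ρ v < ρ u then G.e u v else 0 := by
    intro v
    rw [Finset.sum_filter]
    refine Finset.sum_congr rfl fun u _ => ?_
    rcases lt_trichotomy (ρ u) (ρ v) with h | h | h
    · simp [not_lt.mpr h.le, h, not_lt.mpr h.le, if_neg (by omega : ¬ ρ v < ρ u)]
    · have : u = v := hinj h
      subst this
      simp [G.loopless]
    · simp [h, not_lt.mpr h.le, if_pos h]
  have step4 : ∑ v, ∑ u, (if ρ v < ρ u then G.e u v else 0)
      = ∑ v, ∑ u ∈ Finset.univ.filter (fun u => ρ u < ρ v), G.e u v := by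
    rw [Finset.sum_comm]
    refine Finset.sum_congr rfl fun v _ => ?_
    rw [Finset.sum_filter]
    exact Finset.sum_congr rfl fun u _ => by rw [G.symm]
  calc ∑ u, ∑ v, G.e u v = ∑ v, ∑ u, G.e u v := step1
    _ = ∑ v, (∑ u ∈ Finset.univ.filter (fun u => ρ u < ρ v), G.e u v
        + ∑ u ∈ Finset.univ.filter (fun u => ¬ ρ u < ρ v), G.e u v) :=
      Finset.sum_congr rfl fun v _ => step2 v
    _ = ∑ v, ∑ u ∈ Finset.univ.filter (fun u => ρ u < ρ v), G.e u v
        + ∑ v, ∑ u ∈ Finset.univ.filter (fun u => ¬ ρ u < ρ v), G.e u v :=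
      Finset.sum_add_distrib
    _ = 2 * ∑ v, ∑ u ∈ Finset.univ.filter (fun u => ρ u < ρ v), G.e u v := by
      rw [show (∑ v, ∑ u ∈ Finset.univ.filter (fun u => ¬ ρ u < ρ v), G.e u v)
          = ∑ v, ∑ u ∈ Finset.univ.filter (fun u => ρ u < ρ v), G.e u v from by
        rw [show (∑ v, ∑ u ∈ Finset.univ.filter (fun u => ¬ ρ u < ρ v), G.e u v)
            = ∑ v, ∑ u, (if ρ v < ρ u then G.e u v else 0) from
          Finset.sum_congr rfl fun v _ => step3 v, step4]]
      ring

lemma edgeCount_eq (G : Multigraph V) {ρ : V → ℕ} (hinj : Function.Injective ρ) :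
    G.edgeCount = ∑ v, ∑ u ∈ Finset.univ.filter (fun u => ρ u < ρ v), G.e u v := by
  unfold edgeCount
  rw [G.sum_split hinj]
  omega

/-- the divisor `ν` attached to a ranking -/
def nuDiv (G : Multigraph V) (ρ : V → ℕ) : V → ℤ :=
  fun v => (∑ u ∈ Finset.univ.filter (fun u => ρ u < ρ v), G.e' u v) - 1

lemma degree_nuDiv (G : Multigraph V) {ρ : V → ℕ} (hinj : Function.Injective ρ) :
    degree (G.nuDiv ρ) = (G.edgeCount : ℤ) - (Fintype.card V : ℤ) := by
  unfold degree nuDiv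
  rw [Finset.sum_sub_distrib]
  rw [G.edgeCount_eq hinj]
  simp only [Finset.sum_const, Finset.card_univ, nsmul_eq_mul, mul_one, e']
  push_cast
  ring

lemma nuDiv_not_lEffective (G : Multigraph V) [Nonempty V] (ρ : V → ℕ)
    (hinj : Function.Injective ρ) : ¬ G.LEffective (G.nuDiv ρ) := by
  rintro ⟨h, ⟨x, hx⟩, hhe⟩
  obtain ⟨v₀, -, hv₀⟩ := Finset.exists_min_image Finset.univ x ⟨Classical.arbitrary V, mem_univ _⟩
  obtain ⟨v, hvB, hvmin⟩ := Finset.exists_min_image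
    (univ.filter (fun u => x u = x v₀)) ρ ⟨v₀, by simp⟩
  have hxv : x v = x v₀ := (mem_filter.mp hvB).2
  have hlt : ∀ u, ρ u < ρ v → x v - x u ≤ -1 := by
    intro u hu
    have h1 : x v₀ ≤ x u := hv₀ u (mem_univ u)
    have h2 : x u ≠ x v₀ := by
      intro he
      exact absurd (hvmin u (mem_filter.mpr ⟨mem_univ u, he⟩)) (not_le.mpr hu)
    omega
  have hb : G.lapApply x v ≤ - ∑ u ∈ Finset.univ.filter (fun u => ρ u < ρ v), G.e' u v := by
    rw [lapApply_eq]
    have hterm : ∀ u ∈ Finset.univ,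
        (x v - x u) * G.e' u v ≤ (if ρ u < ρ v then -G.e' u v else 0) := by
      intro u _
      by_cases hcase : ρ u < ρ v
      · rw [if_pos hcase]
        have h1 := hlt u hcase
        have h2 := G.e'_nonneg u v
        nlinarith
      · rw [if_neg hcase]
        have h1 : x v - x u ≤ 0 := by
          have := hv₀ u (mem_univ u); omega
        have h2 := G.e'_nonneg u v
        nlinarith
    calc ∑ u, (x v - x u) * G.e' u v ≤ ∑ u, (if ρ u < ρ v then -G.e' u v else 0) :=
        Finset.sum_le_sum hterm
      _ = - ∑ u ∈ Finset.univ.filter (fun u => ρ u < ρ v), G.e' u v := by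
        rw [← Finset.sum_filter, ← Finset.sum_neg_distrib]
  have h0 : (0:ℤ) ≤ h v := hhe v
  have h1 : h v = G.nuDiv ρ v + G.lapApply x v := by rw [hx]; simp
  unfold nuDiv at h1
  omega

/-- a connected graph has at least `n - 1` edges -/
lemma card_pred_le_edgeCount (G : Multigraph V) {ρ : V → ℕ} {q : V}
    (hinj : Function.Injective ρ)
    (hnb : ∀ v, v ≠ q → ∃ u, G.e u v ≠ 0 ∧ ρ u < ρ v) :
    Fintype.card V - 1 ≤ G.edgeCount := by
  rw [G.edgeCount_eq hinj]
  have h1 : ∀ v ∈ Finset.univ.erase q,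
      1 ≤ ∑ u ∈ Finset.univ.filter (fun u => ρ u < ρ v), G.e u v := by
    intro v hv
    obtain ⟨u, hu, hru⟩ := hnb v (Finset.ne_of_mem_erase hv)
    calc 1 ≤ G.e u v := Nat.one_le_iff_ne_zero.mpr hu
      _ ≤ ∑ u ∈ Finset.univ.filter (fun u => ρ u < ρ v), G.e u v :=
        Finset.single_le_sum (f := fun u => G.e u v) (fun _ _ => Nat.zero_le _)
          (Finset.mem_filter.mpr ⟨mem_univ u, hru⟩)
  have hc : (Finset.univ.erase q).card = Fintype.card V - 1 := by
    rw [Finset.card_erase_of_mem (Finset.mem_univ q), Finset.card_univ]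
  calc Fintype.card V - 1 = (Finset.univ.erase q).card := hc.symm
    _ = ∑ _v ∈ Finset.univ.erase q, 1 := by rw [Finset.sum_const, smul_eq_mul, mul_one]
    _ ≤ ∑ v ∈ Finset.univ.erase q, ∑ u ∈ Finset.univ.filter (fun u => ρ u < ρ v), G.e u v :=
      Finset.sum_le_sum h1
    _ ≤ ∑ v, ∑ u ∈ Finset.univ.filter (fun u => ρ u < ρ v), G.e u v :=
      Finset.sum_le_sum_of_subset (Finset.subset_univ _)

end Multigraph
namespace Multigraph

open Finset

variable {V : Type*} [Fintype V] [DecidableEq V]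

/-- The Laplacian action over `ℚ`. -/
def lapQ (G : Multigraph V) : (V → ℚ) →ₗ[ℚ] (V → ℚ) where
  toFun x := fun v => ∑ u, (x v - x u) * (G.e u v : ℚ)
  map_add' x y := by
    funext v
    simp only [Pi.add_apply, ← Finset.sum_add_distrib]
    exact Finset.sum_congr rfl fun u _ => by ring
  map_smul' c x := by
    funext v
    simp only [Pi.smul_apply, smul_eq_mul, RingHom.id_apply, Finset.mul_sum]
    exact Finset.sum_congr rfl fun u _ => by ring

lemma lapQ_apply (G : Multigraph V) (x : V → ℚ) (v : V) :
    G.lapQ x v = ∑ u, (x v - x u) * (G.e u v : ℚ) := rfl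

lemma lapQ_cast (G : Multigraph V) (y : V → ℤ) :
    (fun v => ((G.lapApply y v : ℤ) : ℚ)) = G.lapQ (fun u => (y u : ℚ)) := by
  funext v
  rw [lapApply_eq, lapQ_apply]
  push_cast [e']
  rfl

lemma lapQ_const_of_ker (G : Multigraph V) (hG : G.Connected) {x : V → ℚ}
    (hx : G.lapQ x = 0) (v₀ : V) (hv₀ : ∀ u, x u ≤ x v₀) : ∀ v, x v = x v₀ := by
  have step : ∀ a c, G.toSimple.Adj a c → x a = x v₀ → x c = x v₀ := by
    intro a c hac ha
    have h0 : ∑ u, (x a - x u) * (G.e u a : ℚ) = 0 := by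
      have := congrFun hx a; rwa [lapQ_apply] at this
    have hnn : ∀ u ∈ Finset.univ, 0 ≤ (x a - x u) * (G.e u a : ℚ) := by
      intro u _
      have h1 : x u ≤ x a := ha ▸ hv₀ u
      exact mul_nonneg (sub_nonneg.mpr h1) (by positivity)
    have hall := (Finset.sum_eq_zero_iff_of_nonneg hnn).mp h0 c (mem_univ c)
    have hec : (G.e c a : ℚ) ≠ 0 := by
      have : G.e c a ≠ 0 := by rw [G.symm]; exact hac
      exact_mod_cast this
    rcases mul_eq_zero.mp hall with h | h
    · have : x c = x a := by linarith [sub_eq_zero.mp h]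
      rw [this, ha]
    · exact absurd h hec
  intro v
  obtain ⟨w⟩ : G.toSimple.Reachable v₀ v := (show G.toSimple.Connected from hG).preconnected v₀ v
  have : ∀ (a b : V) (_ : G.toSimple.Walk a b), x a = x v₀ → x b = x v₀ := by
    intro a b p
    induction p with
    | nil => exact id
    | cons h _ ih => exact fun ha => ih (step _ _ h ha)
  exact this v₀ v w rfl

/-- the sum functional -/
def sumQ : (V → ℚ) →ₗ[ℚ] ℚ where
  toFun x := ∑ v, x v
  map_add' x y := by simp [Finset.sum_add_distrib]
  map_smul' c x := by simp [Finset.mul_sum]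

/-- some positive multiple of `δ_u - δ_q` is a Laplacian image -/
lemma exists_int_firing (G : Multigraph V) (hG : G.Connected) (q u : V) :
    ∃ (N : ℕ) (y : V → ℤ), 0 < N ∧
      G.lapApply y = fun v => (N : ℤ) * ((if v = u then 1 else 0) - (if v = q then 1 else 0)) := by
  classical
  haveI : Nonempty V := ⟨q⟩
  set n := Fintype.card V with hn
  -- kernel of lapQ is at most the constants
  have hker_le : LinearMap.ker G.lapQ ≤ Submodule.span ℚ {(fun _ => (1:ℚ) : V → ℚ)} := by
    intro x hx
    obtain ⟨v₀, -, hv₀⟩ := Finset.exists_max_image Finset.univ x ⟨q, mem_univ q⟩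
    have hconst := G.lapQ_const_of_ker hG (LinearMap.mem_ker.mp hx) v₀ (fun u => hv₀ u (mem_univ u))
    rw [Submodule.mem_span_singleton]
    exact ⟨x v₀, funext fun v => by simp [(hconst v).symm]⟩
  have h1ne : (fun _ => (1:ℚ) : V → ℚ) ≠ 0 := by
    intro h
    have := congrFun h q
    simp at this
  have hkerrank : Module.finrank ℚ (LinearMap.ker G.lapQ) ≤ 1 := by
    calc Module.finrank ℚ (LinearMap.ker G.lapQ)
        ≤ Module.finrank ℚ (Submodule.span ℚ {(fun _ => (1:ℚ) : V → ℚ)}) :=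
        Submodule.finrank_mono hker_le
      _ = 1 := finrank_span_singleton h1ne
  have hrange_le : LinearMap.range G.lapQ ≤ LinearMap.ker (sumQ (V := V)) := by
    rintro - ⟨x, rfl⟩
    rw [LinearMap.mem_ker]
    show ∑ v, G.lapQ x v = 0
    simp only [lapQ_apply]
    have hsplit : ∀ v, ∑ u, (x v - x u) * (G.e u v : ℚ)
        = x v * (∑ u, (G.e u v : ℚ)) - ∑ u, x u * (G.e u v : ℚ) := by
      intro v
      rw [Finset.mul_sum, ← Finset.sum_sub_distrib]
      exact Finset.sum_congr rfl fun u _ => by ring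
    simp only [hsplit]
    rw [Finset.sum_sub_distrib, sub_eq_zero]
    have h2 : ∑ w, ∑ u, x u * (G.e u w : ℚ) = ∑ u, x u * ∑ w, (G.e u w : ℚ) := by
      rw [Finset.sum_comm]
      exact Finset.sum_congr rfl fun u _ => (Finset.mul_sum _ _ _).symm
    rw [h2]
    refine Finset.sum_congr rfl fun w _ => ?_
    congr 1
    refine Finset.sum_congr rfl fun u _ => ?_
    exact_mod_cast G.symm u w
  have hsum_surj : LinearMap.range (sumQ (V := V)) = ⊤ := by
    rw [LinearMap.range_eq_top]
    intro c
    refine ⟨fun v => if v = q then c else 0, ?_⟩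
    show (∑ v, if v = q then c else 0) = c
    simp
  have hfr : Module.finrank ℚ (V → ℚ) = n := by
    rw [Module.finrank_pi]
  have hrn1 := LinearMap.finrank_range_add_finrank_ker (sumQ (V := V))
  have hrn2 := LinearMap.finrank_range_add_finrank_ker G.lapQ
  have hrs : Module.finrank ℚ (LinearMap.range (sumQ (V := V))) = 1 := by
    rw [hsum_surj, finrank_top, Module.finrank_self]
  have hkq : Module.finrank ℚ (LinearMap.ker (sumQ (V := V))) = n - 1 := by omega
  have hrl : Module.finrank ℚ (LinearMap.range G.lapQ) ≥ n - 1 := by omega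
  have heq : LinearMap.range G.lapQ = LinearMap.ker (sumQ (V := V)) :=
    Submodule.eq_of_le_of_finrank_le hrange_le (by omega)
  -- target vector
  set w : V → ℚ := fun v => (if v = u then 1 else 0) - (if v = q then 1 else 0) with hw
  have hwk : w ∈ LinearMap.ker (sumQ (V := V)) := by
    rw [LinearMap.mem_ker]
    show (∑ v, ((if v = u then (1:ℚ) else 0) - (if v = q then 1 else 0))) = 0
    rw [Finset.sum_sub_distrib]
    simp
  rw [← heq] at hwk
  obtain ⟨x, hxw⟩ := hwk
  set N : ℕ := ∏ v, (x v).den with hN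
  have hNpos : 0 < N := Finset.prod_pos fun v _ => (x v).pos
  have hint : ∀ v, ∃ z : ℤ, (z : ℚ) = (N : ℚ) * x v := by
    intro v
    obtain ⟨k, hk⟩ := Finset.dvd_prod_of_mem (fun v => (x v).den) (mem_univ v)
    refine ⟨(x v).num * k, ?_⟩
    rw [← hN] at hk
    rw [hk]
    push_cast
    rw [show ((x v).den : ℚ) * (k : ℚ) * x v = ((x v) * (x v).den) * k by ring,
      Rat.mul_den_eq_num]
  choose y hy using hint
  refine ⟨N, y, hNpos, ?_⟩
  have hycast : (fun v => ((y v : ℤ) : ℚ)) = (N : ℚ) • x := funext fun v => by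
    rw [hy v]; simp
  funext v
  have hcastv : ((G.lapApply y v : ℤ) : ℚ) = (N : ℚ) * w v := by
    calc ((G.lapApply y v : ℤ) : ℚ) = G.lapQ (fun u => (y u : ℚ)) v := congrFun (G.lapQ_cast y) v
      _ = ((N : ℚ) • G.lapQ x) v := by rw [hycast, map_smul]
      _ = (N : ℚ) * w v := by rw [hxw]; simp
  have : ((G.lapApply y v : ℤ) : ℚ)
      = (((N : ℤ) * ((if v = u then 1 else 0) - (if v = q then 1 else 0)) : ℤ) : ℚ) := by
    rw [hcastv, hw]
    push_cast
    by_cases h1 : v = u <;> by_cases h2 : v = q <;> simp [h1, h2]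
  exact_mod_cast this

/-- every divisor is equivalent to one nonnegative away from `q` -/
lemma exists_nonneg_off (G : Multigraph V) (hG : G.Connected) (q : V) (f : V → ℤ) :
    ∃ f', G.LinEquiv f f' ∧ ∀ v, v ≠ q → 0 ≤ f' v := by
  classical
  choose N y hN hylap using fun u => G.exists_int_firing hG q u
  set t : V → ℤ := fun u => max 0 (-f u) with ht
  set x : V → ℤ := ∑ u, t u • y u with hx
  refine ⟨f + G.lapApply x, ⟨x, rfl⟩, ?_⟩
  intro v hv
  have hlaps : G.lapApply x = ∑ u, t u • G.lapApply (y u) := by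
    rw [← lapZ_apply, hx, map_sum]
    exact Finset.sum_congr rfl fun u _ => by rw [map_smul]; rfl
  have hval : G.lapApply x v = t v * (N v : ℤ) := by
    rw [hlaps]
    have : ∀ u : V, (t u • G.lapApply (y u)) v
        = t u * ((N u : ℤ) * ((if v = u then 1 else 0) - (if v = q then 1 else 0))) := by
      intro u
      rw [Pi.smul_apply, smul_eq_mul, hylap u]
    rw [Finset.sum_apply]
    simp only [this, if_neg hv, sub_zero, mul_ite, mul_one, mul_zero]
    rw [Finset.sum_ite_eq Finset.univ v (fun u => t u * (N u : ℤ))]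
    simp
  rw [Pi.add_apply, hval]
  have h1 : (0:ℤ) ≤ t v := le_max_left _ _
  have h2 : (1:ℤ) ≤ (N v : ℤ) := by exact_mod_cast hN v
  have h3 : t v * 1 ≤ t v * (N v : ℤ) := mul_le_mul_of_nonneg_left h2 h1
  have h4 : -f v ≤ t v := le_max_right _ _
  omega

end Multigraph
namespace Multigraph

open Finset

variable {V : Type*} [Fintype V] [DecidableEq V]

lemma sum_lap_subset (G : Multigraph V) (x : V → ℤ) (T : Finset V) :
    ∑ w ∈ T, G.lapApply x w = ∑ w ∈ T, ∑ u ∈ Tᶜ, (x w - x u) * G.e' u w := by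
  have hzero : ∑ w ∈ T, ∑ u ∈ T, (x w - x u) * G.e' u w = 0 := by
    have h1 : ∑ w ∈ T, ∑ u ∈ T, (x w - x u) * G.e' u w
        = ∑ w ∈ T, ∑ u ∈ T, x w * G.e' u w - ∑ w ∈ T, ∑ u ∈ T, x u * G.e' u w := by
      rw [← Finset.sum_sub_distrib]
      refine Finset.sum_congr rfl fun w _ => ?_
      rw [← Finset.sum_sub_distrib]
      exact Finset.sum_congr rfl fun u _ => by ring
    have h2 : ∑ w ∈ T, ∑ u ∈ T, x u * G.e' u w = ∑ w ∈ T, ∑ u ∈ T, x w * G.e' u w := by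
      rw [Finset.sum_comm]
      refine Finset.sum_congr rfl fun w _ => ?_
      refine Finset.sum_congr rfl fun u _ => ?_
      rw [G.e'_symm]
    rw [h1, h2, sub_self]
  calc ∑ w ∈ T, G.lapApply x w
      = ∑ w ∈ T, (∑ u ∈ T, (x w - x u) * G.e' u w + ∑ u ∈ Tᶜ, (x w - x u) * G.e' u w) := by
        refine Finset.sum_congr rfl fun w _ => ?_
        rw [lapApply_eq, Finset.sum_add_sum_compl]
    _ = ∑ w ∈ T, ∑ u ∈ T, (x w - x u) * G.e' u w
        + ∑ w ∈ T, ∑ u ∈ Tᶜ, (x w - x u) * G.e' u w := Finset.sum_add_distrib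
    _ = ∑ w ∈ T, ∑ u ∈ Tᶜ, (x w - x u) * G.e' u w := by rw [hzero, zero_add]

/-- every divisor is equivalent to a `q`-reduced one -/
lemma exists_reduced (G : Multigraph V) (hG : G.Connected) {q : V} {ρ : V → ℕ}
    (hinj : Function.Injective ρ)
    (hqmin : ∀ v, v ≠ q → ρ q < ρ v)
    (hnb : ∀ v, v ≠ q → ∃ u, G.e u v ≠ 0 ∧ ρ u < ρ v)
    (f : V → ℤ) :
    ∃ f', G.LinEquiv f f' ∧ (∀ v, v ≠ q → 0 ≤ f' v) ∧
      ∀ S : Finset V, q ∉ S → S.Nonempty →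
        ∃ v ∈ S, f' v < ∑ u ∈ Sᶜ, G.e' u v := by
  classical
  haveI : Nonempty V := ⟨q⟩
  obtain ⟨f₀, hf₀eq, hf₀⟩ := G.exists_nonneg_off hG q f
  set D : Set (V → ℤ) := {g | G.LinEquiv f g ∧ ∀ v, v ≠ q → 0 ≤ g v} with hD
  have hf₀D : f₀ ∈ D := ⟨hf₀eq, hf₀⟩
  have hdegD : ∀ g ∈ D, degree g = degree f := fun g hg => G.degree_eq_of_linEquiv hg.1
  have herase : ∀ g : V → ℤ, degree g = g q + ∑ w ∈ Finset.univ.erase q, g w :=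
    fun g => (Finset.add_sum_erase Finset.univ g (mem_univ q)).symm
  have hbd : ∀ z, (∃ g ∈ D, g q = z) → z ≤ degree f := by
    rintro z ⟨g, hg, rfl⟩
    have h1 : 0 ≤ ∑ w ∈ Finset.univ.erase q, g w :=
      Finset.sum_nonneg fun w hw => hg.2 w (Finset.ne_of_mem_erase hw)
    have h2 := herase g
    have h3 := hdegD g hg
    omega
  obtain ⟨M, ⟨fM, hfM, hfMq⟩, hMmax⟩ :=
    Int.exists_greatest_of_bdd ⟨degree f, hbd⟩ ⟨f₀ q, f₀, hf₀D, rfl⟩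
  set D' : Set (V → ℤ) := {g ∈ D | g q = M} with hD'
  have hfMD' : fM ∈ D' := ⟨hfM, hfMq⟩
  -- the tail sets and the measure
  set T : V → Finset V := fun v => Finset.univ.filter (fun w => ρ v ≤ ρ w) with hT
  set sInt : (V → ℤ) → V → ℤ := fun g v => ∑ w ∈ T v, g w with hsInt
  set μ : (V → ℤ) → V → ℕ := fun g v => (sInt g v).toNat with hμ
  have hTq : T q = Finset.univ := by
    rw [hT]
    refine Finset.eq_univ_of_forall fun w => ?_
    simp only [Finset.mem_filter, mem_univ, true_and]
    rcases eq_or_ne w q with rfl | hw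
    · exact le_rfl
    · exact le_of_lt (hqmin w hw)
  have hTsub : ∀ v, v ≠ q → T v ⊆ Finset.univ.erase q := by
    intro v hv w hw
    rw [hT, Finset.mem_filter] at hw
    refine Finset.mem_erase.mpr ⟨?_, mem_univ w⟩
    rintro rfl
    exact absurd (lt_of_lt_of_le (hqmin v hv) hw.2) (lt_irrefl _)
  have hsnn : ∀ g ∈ D, ∀ v, v ≠ q → 0 ≤ sInt g v := by
    intro g hg v hv
    exact Finset.sum_nonneg fun w hw => hg.2 w (Finset.ne_of_mem_erase (hTsub v hv hw))
  have hsq : ∀ g ∈ D, sInt g q = degree f := by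
    intro g hg
    rw [hsInt]
    simp only [hTq]
    exact hdegD g hg
  -- coordinates are bounded on D'
  set B : ℕ := max (degree f).toNat (degree f - M).toNat with hB
  have hbound : ∀ g ∈ D', ∀ v, μ g v ≤ B := by
    intro g hg v
    rcases eq_or_ne v q with rfl | hv
    · rw [hμ]
      simp only
      rw [hsq g hg.1]
      exact le_max_of_le_left le_rfl
    · have h1 : sInt g v ≤ ∑ w ∈ Finset.univ.erase q, g w :=
        Finset.sum_le_sum_of_subset_of_nonneg (hTsub v hv)
          (fun w hw _ => hg.1.2 w (Finset.ne_of_mem_erase hw))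
      have h2 := herase g
      have h3 := hdegD g hg.1
      have h2' : g q = M := hg.2
      have h4 : sInt g v ≤ degree f - M := by omega
      exact le_trans (Int.toNat_le_toNat h4) (le_max_right _ _)
  -- the measure image is finite; take a minimizer
  letI : LinearOrder V := LinearOrder.lift' ρ hinj
  haveI : WellFoundedLT V := Finite.to_wellFoundedLT
  set μL : (V → ℤ) → Lex (V → ℕ) := fun g => toLex (μ g) with hμL
  have hfin : (μL '' D').Finite := by
    refine Set.Finite.subset (Set.Finite.pi (fun _ : V => Set.finite_Iic B)) ?_
    rintro - ⟨g, hg, rfl⟩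
    intro v _
    exact hbound g hg v
  obtain ⟨m, ⟨fmin, hfminD', hfm⟩, hmin⟩ :=
    Set.exists_min_image (μL '' D') id hfin ⟨μL fM, fM, hfMD', rfl⟩
  refine ⟨fmin, hfminD'.1.1, hfminD'.1.2, ?_⟩
  by_contra hcon
  push_neg at hcon
  obtain ⟨S, hqS, hSne, hSfire⟩ := hcon
  -- fire the set S
  set x : V → ℤ := fun u => if u ∈ S then (-1 : ℤ) else 0 with hx
  set f'' : V → ℤ := fmin + G.lapApply x with hf''
  have hval_in : ∀ v ∈ S, G.lapApply x v = - ∑ u ∈ Sᶜ, G.e' u v := by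
    intro v hv
    rw [lapApply_eq, ← Finset.sum_add_sum_compl S (fun u => (x v - x u) * G.e' u v)]
    have h1 : ∑ u ∈ S, (x v - x u) * G.e' u v = 0 := by
      refine Finset.sum_eq_zero fun u hu => ?_
      rw [hx]
      simp [if_pos hu, if_pos hv]
    have h2 : ∑ u ∈ Sᶜ, (x v - x u) * G.e' u v = - ∑ u ∈ Sᶜ, G.e' u v := by
      rw [← Finset.sum_neg_distrib]
      refine Finset.sum_congr rfl fun u hu => ?_
      rw [hx]
      simp only [if_pos hv, if_neg (Finset.mem_compl.mp hu)]
      ring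
    rw [h1, h2, zero_add]
  have hval_out : ∀ v, v ∉ S → G.lapApply x v = ∑ u ∈ S, G.e' u v := by
    intro v hv
    rw [lapApply_eq, ← Finset.sum_add_sum_compl S (fun u => (x v - x u) * G.e' u v)]
    have h1 : ∑ u ∈ S, (x v - x u) * G.e' u v = ∑ u ∈ S, G.e' u v := by
      refine Finset.sum_congr rfl fun u hu => ?_
      rw [hx]
      simp only [if_pos hu, if_neg hv]
      ring
    have h2 : ∑ u ∈ Sᶜ, (x v - x u) * G.e' u v = 0 := by
      refine Finset.sum_eq_zero fun u hu => ?_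
      rw [hx]
      simp [if_neg hv, if_neg (Finset.mem_compl.mp hu)]
    rw [h1, h2, add_zero]
  have hf''D : f'' ∈ D := by
    constructor
    · exact G.linEquiv_trans hfminD'.1.1 ⟨x, rfl⟩
    · intro v hv
      rw [hf'']
      by_cases hvS : v ∈ S
      · rw [Pi.add_apply, hval_in v hvS]
        have := hSfire v hvS
        omega
      · rw [Pi.add_apply, hval_out v hvS]
        have h1 : 0 ≤ ∑ u ∈ S, G.e' u v := Finset.sum_nonneg fun u _ => G.e'_nonneg u v
        have h2 := hfminD'.1.2 v hv
        omega
  have hf''q : f'' q = M := by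
    have h1 : f'' q ≤ M := hMmax _ ⟨f'', hf''D, rfl⟩
    have h2 : f'' q = fmin q + ∑ u ∈ S, G.e' u q := by
      rw [hf'', Pi.add_apply, hval_out q hqS]
    have h3 : 0 ≤ ∑ u ∈ S, G.e' u q := Finset.sum_nonneg fun u _ => G.e'_nonneg u q
    have h4 := hfminD'.2
    omega
  have hf''D' : f'' ∈ D' := ⟨hf''D, hf''q⟩
  -- the minimal-rank vertex of S
  obtain ⟨vs, hvsS, hvsmin⟩ := Finset.exists_min_image S ρ hSne
  have hvsq : vs ≠ q := fun h => hqS (h ▸ hvsS)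
  -- coordinate deltas
  have hdelta : ∀ v, ρ v ≤ ρ vs →
      sInt f'' v = sInt fmin v + ∑ w ∈ T v, x w * (∑ u ∈ (T v)ᶜ, G.e' u w) := by
    intro v hv
    have hTc0 : ∀ u ∈ (T v)ᶜ, x u = 0 := by
      intro u hu
      rw [Finset.mem_compl, hT, Finset.mem_filter] at hu
      have hnotle : ¬ ρ v ≤ ρ u := fun h => hu ⟨mem_univ u, h⟩
      show (if u ∈ S then (-1:ℤ) else 0) = 0
      rw [if_neg]
      intro huS
      exact hnotle (le_trans hv (hvsmin u huS))
    have h1 : sInt f'' v = sInt fmin v + ∑ w ∈ T v, G.lapApply x w := by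
      rw [hsInt, hf'']
      simp only [Pi.add_apply]
      rw [Finset.sum_add_distrib]
    rw [h1, G.sum_lap_subset x (T v)]
    congr 1
    refine Finset.sum_congr rfl fun w _ => ?_
    rw [Finset.mul_sum]
    refine Finset.sum_congr rfl fun u hu => ?_
    rw [hTc0 u hu]
    ring
  have hterm_nonpos : ∀ v, ∀ w ∈ T v, x w * (∑ u ∈ (T v)ᶜ, G.e' u w) ≤ 0 := by
    intro v w _
    have h1 : 0 ≤ ∑ u ∈ (T v)ᶜ, G.e' u w := Finset.sum_nonneg fun u _ => G.e'_nonneg u w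
    have h2 : x w ≤ 0 := by
      show (if w ∈ S then (-1:ℤ) else 0) ≤ 0
      split <;> omega
    exact mul_nonpos_iff.mpr (Or.inr ⟨h2, h1⟩)
  have hle : ∀ v, v ≠ q → ρ v ≤ ρ vs → sInt f'' v ≤ sInt fmin v := by
    intro v _ hv
    rw [hdelta v hv]
    have := Finset.sum_nonpos (hterm_nonpos v)
    omega
  have hstrict : sInt f'' vs < sInt fmin vs := by
    obtain ⟨u₀, hu₀e, hu₀ρ⟩ := hnb vs hvsq
    have hvsT : vs ∈ T vs := by
      rw [hT, Finset.mem_filter]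
      exact ⟨mem_univ vs, le_rfl⟩
    have hu₀Tc : u₀ ∈ (T vs)ᶜ := by
      rw [Finset.mem_compl, hT, Finset.mem_filter]
      rintro ⟨-, h⟩
      omega
    have hcvs : (1:ℤ) ≤ ∑ u ∈ (T vs)ᶜ, G.e' u vs := by
      calc (1:ℤ) ≤ G.e' u₀ vs := by
            unfold e'; exact_mod_cast Nat.one_le_iff_ne_zero.mpr hu₀e
        _ ≤ ∑ u ∈ (T vs)ᶜ, G.e' u vs :=
          Finset.single_le_sum (f := fun u => G.e' u vs) (fun u _ => G.e'_nonneg u vs) hu₀Tc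
    have hxvs : x vs = -1 := by
      show (if vs ∈ S then (-1:ℤ) else 0) = -1
      rw [if_pos hvsS]
    have hsplit : ∑ w ∈ T vs, x w * (∑ u ∈ (T vs)ᶜ, G.e' u w)
        = x vs * (∑ u ∈ (T vs)ᶜ, G.e' u vs)
          + ∑ w ∈ (T vs).erase vs, x w * (∑ u ∈ (T vs)ᶜ, G.e' u w) :=
      (Finset.add_sum_erase _ _ hvsT).symm
    have hrest : ∑ w ∈ (T vs).erase vs, x w * (∑ u ∈ (T vs)ᶜ, G.e' u w) ≤ 0 :=
      Finset.sum_nonpos fun w hw => hterm_nonpos vs w (Finset.mem_of_mem_erase hw)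
    have := hdelta vs le_rfl
    rw [hsplit, hxvs] at this
    omega
  -- produce a lexicographically smaller measure
  have hμq : μ f'' q = μ fmin q := by
    rw [hμ]
    simp only
    rw [hsq f'' hf''D, hsq fmin hfminD'.1]
  set Dif : Finset V := Finset.univ.filter (fun v => μ f'' v ≠ μ fmin v) with hDif
  have hvsDif : vs ∈ Dif := by
    rw [hDif, Finset.mem_filter]
    refine ⟨mem_univ vs, ?_⟩
    have h1 := hsnn f'' hf''D vs hvsq
    have h2 := hsnn fmin hfminD'.1 vs hvsq
    have e1 : (μ f'' vs : ℤ) = sInt f'' vs := Int.toNat_of_nonneg h1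
    have e2 : (μ fmin vs : ℤ) = sInt fmin vs := Int.toNat_of_nonneg h2
    omega
  obtain ⟨v₁, hv₁Dif, hv₁min⟩ := Finset.exists_min_image Dif ρ ⟨vs, hvsDif⟩
  have hv₁q : v₁ ≠ q := by
    rintro rfl
    rw [hDif, Finset.mem_filter] at hv₁Dif
    exact hv₁Dif.2 hμq
  have hv₁vs : ρ v₁ ≤ ρ vs := hv₁min vs hvsDif
  have hv₁strict : μ f'' v₁ < μ fmin v₁ := by
    have h1 := hsnn f'' hf''D v₁ hv₁q
    have h2 := hsnn fmin hfminD'.1 v₁ hv₁q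
    have e1 : (μ f'' v₁ : ℤ) = sInt f'' v₁ := Int.toNat_of_nonneg h1
    have e2 : (μ fmin v₁ : ℤ) = sInt fmin v₁ := Int.toNat_of_nonneg h2
    have h3 := hle v₁ hv₁q hv₁vs
    rw [hDif, Finset.mem_filter] at hv₁Dif
    have h4 := hv₁Dif.2
    omega
  have hv₁eq : ∀ j, ρ j < ρ v₁ → μ f'' j = μ fmin j := by
    intro j hj
    by_contra hne
    have : j ∈ Dif := by rw [hDif, Finset.mem_filter]; exact ⟨mem_univ j, hne⟩
    exact absurd (hv₁min j this) (not_le.mpr hj)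
  have hlex : μL f'' < μL fmin := by
    refine ⟨v₁, fun j hj => hv₁eq j hj, hv₁strict⟩
  have h1 : m ≤ μL f'' := hmin (μL f'') ⟨f'', hf''D', rfl⟩
  rw [hfm] at hlex
  exact absurd (lt_of_le_of_lt h1 hlex) (lt_irrefl _)

end Multigraph
namespace Multigraph

open Finset

variable {V : Type*} [Fintype V] [DecidableEq V]

/-- the counting argument for reduced divisors -/
lemma reduced_counting (G : Multigraph V) (f' : V → ℤ) (S : Finset V)
    (hpos : ∀ v ∈ S, 0 ≤ f' v)
    (hred : ∀ T : Finset V, T ⊆ S → T.Nonempty → ∃ v ∈ T, f' v < ∑ u ∈ Tᶜ, G.e' u v) :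
    2 * ∑ v ∈ S, (f' v + 1)
      ≤ 2 * ∑ v ∈ S, (∑ u, G.e' u v) - ∑ v ∈ S, ∑ u ∈ S, G.e' u v := by
  classical
  induction S using Finset.strongInduction with
  | _ S ih =>
    rcases S.eq_empty_or_nonempty with rfl | hne
    · simp
    obtain ⟨v, hvS, hv⟩ := hred S subset_rfl hne
    have hsplitv : ∑ u ∈ S, G.e' u v + ∑ u ∈ Sᶜ, G.e' u v = ∑ u, G.e' u v :=
      Finset.sum_add_sum_compl S _
    have hv' : f' v + 1 ≤ ∑ u, G.e' u v - ∑ u ∈ S, G.e' u v := by omega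
    set S' := S.erase v with hS'
    have hsub : S' ⊂ S := Finset.erase_ssubset hvS
    have IH := ih S' hsub (fun w hw => hpos w (Finset.mem_of_mem_erase hw))
      (fun T hT hTne => hred T (hT.trans (Finset.erase_subset v S)) hTne)
    have hsum1 : ∀ g : V → ℤ, ∑ w ∈ S, g w = g v + ∑ w ∈ S', g w :=
      fun g => (Finset.add_sum_erase S g hvS).symm
    have hdiag : ∑ u ∈ S, G.e' u v = ∑ u ∈ S', G.e' u v := by
      rw [hsum1 (fun u => G.e' u v), G.e'_diag, zero_add]
    have hrow : ∑ w ∈ S', G.e' v w = ∑ u ∈ S', G.e' u v :=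
      Finset.sum_congr rfl fun w _ => G.e'_symm v w
    have hQ : ∑ w ∈ S, ∑ u ∈ S, G.e' u w
        = ∑ w ∈ S', ∑ u ∈ S', G.e' u w + 2 * ∑ u ∈ S', G.e' u v := by
      rw [hsum1 (fun w => ∑ u ∈ S, G.e' u w), hdiag]
      have h2 : ∀ w, ∑ u ∈ S, G.e' u w = G.e' v w + ∑ u ∈ S', G.e' u w :=
        fun w => hsum1 (fun u => G.e' u w)
      have h3 : ∑ w ∈ S', ∑ u ∈ S, G.e' u w
          = ∑ w ∈ S', G.e' v w + ∑ w ∈ S', ∑ u ∈ S', G.e' u w := by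
        rw [← Finset.sum_add_distrib]
        exact Finset.sum_congr rfl fun w _ => h2 w
      rw [h3, hrow]
      ring
    rw [hsum1 (fun w => f' w + 1), hsum1 (fun w => ∑ u, G.e' u w), hQ]
    have hv'' : f' v + 1 ≤ ∑ u, G.e' u v - ∑ u ∈ S', G.e' u v := by
      rw [← hdiag]; exact hv'
    linarith [IH, hv'']

/-- Riemann's inequality: divisors of degree at least `g` are L-effective. -/
lemma riemann (G : Multigraph V) (hG : G.Connected) (f : V → ℤ)
    (hdeg : (G.edgeCount : ℤ) - (Fintype.card V : ℤ) + 1 ≤ degree f) :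
    G.LEffective f := by
  classical
  haveI : Nonempty V := (show G.toSimple.Connected from hG).nonempty
  set q := Classical.arbitrary V with hq
  obtain ⟨ρ, hinj, hqmin, hnb⟩ := G.exists_rho hG q
  obtain ⟨f', heq, hpos, hred⟩ := G.exists_reduced hG hinj hqmin hnb f
  set S := Finset.univ.erase q with hS
  have hqnotS : ∀ T : Finset V, T ⊆ S → q ∉ T := by
    intro T hT hqT
    exact absurd (Finset.mem_erase.mp (hT hqT)).1 (not_ne_iff.mpr rfl)
  have hcount := G.reduced_counting f' S (fun v hv => hpos v (Finset.ne_of_mem_erase hv))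
    (fun T hT hTne => hred T (hqnotS T hT) hTne)
  -- edge sum identities
  set M' : ℤ := ∑ v, ∑ u, G.e' u v with hM'
  have hmerase : ∀ g : V → ℤ, ∑ w, g w = g q + ∑ w ∈ S, g w :=
    fun g => (Finset.add_sum_erase Finset.univ g (mem_univ q)).symm
  have hA : ∑ v ∈ S, (∑ u, G.e' u v) = M' - ∑ u, G.e' u q := by
    have := hmerase (fun v => ∑ u, G.e' u v)
    omega
  have hB : ∑ v ∈ S, ∑ u ∈ S, G.e' u v = M' - ∑ u, G.e' u q - ∑ u, G.e' u q := by
    have h1 : ∀ v, ∑ u, G.e' u v = G.e' q v + ∑ u ∈ S, G.e' u v :=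
      fun v => hmerase (fun u => G.e' u v)
    have h2 : ∑ v ∈ S, (∑ u, G.e' u v)
        = ∑ v ∈ S, G.e' q v + ∑ v ∈ S, ∑ u ∈ S, G.e' u v := by
      rw [← Finset.sum_add_distrib]
      exact Finset.sum_congr rfl fun v _ => h1 v
    have h3 : ∑ v ∈ S, G.e' q v = ∑ u, G.e' u q := by
      have h4 : ∑ v, G.e' q v = G.e' q q + ∑ v ∈ S, G.e' q v := hmerase (fun v => G.e' q v)
      have h5 : ∑ v, G.e' q v = ∑ u, G.e' u q :=
        Finset.sum_congr rfl fun v _ => G.e'_symm q v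
      have h6 := G.e'_diag q
      omega
    omega
  -- M' equals twice the edge count
  have hM2 : M' = 2 * (G.edgeCount : ℤ) := by
    have h1 : (∑ u, ∑ v, G.e u v) = 2 * ∑ v, ∑ u ∈ Finset.univ.filter (fun u => ρ u < ρ v), G.e u v :=
      G.sum_split hinj
    have h2 := G.edgeCount_eq hinj
    have h3 : M' = ((∑ u, ∑ v, G.e u v : ℕ) : ℤ) := by
      rw [hM']
      push_cast [e']
      rw [Finset.sum_comm]
    rw [h3, h1, h2]
    push_cast
    ring
  have hcardS : (S.card : ℤ) = (Fintype.card V : ℤ) - 1 := by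
    rw [hS, Finset.card_erase_of_mem (mem_univ q), Finset.card_univ]
    have : 0 < Fintype.card V := Fintype.card_pos
    omega
  have hones : ∑ v ∈ S, (f' v + 1) = ∑ v ∈ S, f' v + (S.card : ℤ) := by
    rw [Finset.sum_add_distrib, Finset.sum_const, nsmul_eq_mul, mul_one]
  -- conclude
  have hbound : ∑ v ∈ S, f' v ≤ (G.edgeCount : ℤ) - (Fintype.card V : ℤ) + 1 := by
    rw [hA, hB] at hcount
    rw [hones] at hcount
    have hqnn : 0 ≤ ∑ u, G.e' u q := Finset.sum_nonneg fun u _ => G.e'_nonneg u q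
    omega
  have hdegf' : degree f' = degree f := G.degree_eq_of_linEquiv heq
  have hfq : 0 ≤ f' q := by
    have h1 : degree f' = f' q + ∑ v ∈ S, f' v := hmerase f'
    omega
  refine ⟨f', heq, fun v => ?_⟩
  rcases eq_or_ne v q with rfl | hv
  · exact hfq
  · exact hpos v hv

end Multigraph


open Multigraph

variable {V : Type*} [Fintype V] [DecidableEq V]

/-- if `deg(f) > 2(m − n)` then `ρ(f) = deg(f) − g`, where
`g = m − n + 1`. -/
theorem rank_of_large_degree (G : Multigraph V) (hG : G.Connected)
    (f : V → ℤ)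
    (hdeg : degree f > 2 * ((G.edgeCount : ℤ) - (Fintype.card V : ℤ))) :
    G.rank f = degree f - ((G.edgeCount : ℤ) - (Fintype.card V : ℤ) + 1) := by
  classical
  haveI : Nonempty V := (show G.toSimple.Connected from hG).nonempty
  set v₀ := Classical.arbitrary V with hv₀
  obtain ⟨ρ, hinj, hqmin, hnb⟩ := G.exists_rho hG v₀
  have hmn : (Fintype.card V : ℤ) - 1 ≤ (G.edgeCount : ℤ) := by
    have h1 := G.card_pred_le_edgeCount hinj hnb
    have h2 : 0 < Fintype.card V := Fintype.card_pos
    omega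
  set gg : ℤ := (G.edgeCount : ℤ) - (Fintype.card V : ℤ) + 1 with hgg
  set R : ℤ := degree f - gg with hR
  have hgnn : 0 ≤ gg := by omega
  have hdegf : 2 * gg - 1 ≤ degree f := by omega
  -- single-vertex effective divisors
  have hsingle : ∀ r : ℤ, 0 ≤ r →
      Effective (fun v => if v = v₀ then r else 0) ∧
      degree (fun v => if v = v₀ then r else 0) = r := by
    intro r hr
    constructor
    · intro v; dsimp only; split <;> omega
    · unfold degree
      rw [Finset.sum_ite_eq' Finset.univ v₀ (fun _ => r)]
      simp
  have hrank : G.rank f = sSup ({-1} ∪ {r : ℤ | 0 ≤ r ∧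
      ∀ l : V → ℤ, Effective l → degree l = r → G.LEffective (f - l)}) := rfl
  rcases le_or_gt 0 R with hR0 | hRneg
  · -- main case
    -- the bad divisor ν and the witness E
    have hνdeg : degree (G.nuDiv ρ) = (G.edgeCount : ℤ) - (Fintype.card V : ℤ) :=
      G.degree_nuDiv hinj
    have hνnot : ¬ G.LEffective (G.nuDiv ρ) := G.nuDiv_not_lEffective ρ hinj
    have hdegfnu : degree (f - G.nuDiv ρ) = R + 1 := by
      rw [degree_sub, hνdeg]; omega
    have hfnuLE : G.LEffective (f - G.nuDiv ρ) := by
      refine G.riemann hG _ ?_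
      rw [hdegfnu]; omega
    obtain ⟨E, ⟨x, hx⟩, hEeff⟩ := hfnuLE
    have hEdeg : degree E = R + 1 := by
      rw [G.degree_eq_of_linEquiv ⟨x, hx⟩]; exact hdegfnu
    have hfE : G.LinEquiv (G.nuDiv ρ) (f - E) := by
      refine ⟨-x, ?_⟩
      rw [hx, ← lapZ_apply, ← lapZ_apply, map_neg]
      abel
    have hnotfE : ¬ G.LEffective (f - E) := fun h => hνnot (G.lEffective_congr hfE h)
    -- upper bound for the defining set
    have hub : ∀ s ∈ ({-1} ∪ {r : ℤ | 0 ≤ r ∧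
        ∀ l : V → ℤ, Effective l → degree l = r → G.LEffective (f - l)}), s ≤ R := by
      rintro s (hs | ⟨hs0, hsall⟩)
      · rw [Set.mem_singleton_iff] at hs; omega
      · by_contra hgt
        push_neg at hgt
        set extra : V → ℤ := fun v => if v = v₀ then s - (R + 1) else 0 with hextra
        obtain ⟨hexeff, hexdeg⟩ := hsingle (s - (R + 1)) (by omega)
        have hleff : Effective (E + extra) := fun v => add_nonneg (hEeff v) (hexeff v)
        have hldeg : degree (E + extra) = s := by
          rw [degree_add, hEdeg, hexdeg]; ring
        have hLE := hsall (E + extra) hleff hldeg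
        rw [sub_add_eq_sub_sub] at hLE
        exact hnotfE (G.lEffective_of_sub hLE hexeff)
    -- membership of R
    have hmem : R ∈ {r : ℤ | 0 ≤ r ∧
        ∀ l : V → ℤ, Effective l → degree l = r → G.LEffective (f - l)} := by
      refine ⟨hR0, fun l hle hld => ?_⟩
      refine G.riemann hG _ ?_
      rw [degree_sub, hld]
      omega
    rw [hrank]
    refine le_antisymm (csSup_le ⟨-1, Or.inl rfl⟩ hub) ?_
    exact le_csSup ⟨R, hub⟩ (Or.inr hmem)
  · -- degenerate case: R = -1, gg = 0
    have hRm1 : R = -1 := by omega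
    have hAempty : {r : ℤ | 0 ≤ r ∧
        ∀ l : V → ℤ, Effective l → degree l = r → G.LEffective (f - l)} ⊆ {-1} := by
      rintro r ⟨hr0, hrall⟩
      exfalso
      obtain ⟨hleff, hldeg⟩ := hsingle r hr0
      have hLE := hrall _ hleff hldeg
      have hd := G.degree_nonneg_of_lEffective hLE
      rw [degree_sub, hldeg] at hd
      omega
    rw [hrank, Set.union_eq_self_of_subset_right hAempty, csSup_singleton]
    omega
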